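/- Let (X,r) be a finite quantum binomial set with |X| = n, and let q be the number of square-free D-orbits in X³, i.e. D-orbits O with O ∩ ((Δ₂ × X) ∪ (X × Δ₂)) = ∅. Then q ≤ C(n,3) = n(n−1)(n−2)/6. -/

import Mathlib

/-- The map r¹² = r × id acting on X³ (realized as `X × X × X`). -/
def r12 {X : Type*} (r : X × X → X × X) : X × X × X → X × X × X :=
  fun p => ((r (p.1, p.2.1)).1, (r (p.1, p.2.1)).2, p.2.2)

/-- The map r²³ = id × r acting on X³. -/
def r23 {X : Type*} (r : X × X → X × X) : X × X × X → X × X × X :=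
  fun p => (p.1, (r (p.2.1, p.2.2)).1, (r (p.2.1, p.2.2)).2)

/-- One step of the action of the group D(r) generated by r¹² and r²³. -/
def dStep {X : Type*} (r : X × X → X × X) (a b : X × X × X) : Prop :=
  r12 r a = b ∨ r23 r a = b

/-- `O` is an orbit of the group D(r) = ⟨r¹², r²³⟩ acting on X³. -/
def IsDOrbit {X : Type*} (r : X × X → X × X) (O : Set (X × X × X)) : Prop :=
  ∃ a, O = {b | Relation.EqvGen (dStep r) a b}

/-- `(X,r)` is a quantum binomial set: `r` is involutive, nondegenerate
(left and right actions are bijective) and square-free. -/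
def IsQuantumBinomial {X : Type*} (r : X × X → X × X) : Prop :=
  Function.Involutive r ∧
  (∀ x : X, Function.Bijective (fun y => (r (x, y)).1)) ∧
  (∀ x : X, Function.Bijective (fun y => (r (y, x)).2)) ∧
  (∀ x : X, r (x, x) = (x, x))

/-- The subset Δ₂ × X of X³. -/
def Diag2X {X : Type*} : Set (X × X × X) := {p | p.1 = p.2.1}

/-- The subset X × Δ₂ of X³. -/
def XDiag2 {X : Type*} : Set (X × X × X) := {p | p.2.1 = p.2.2}

/-- The diagonal Δ₃ of X³. -/
def Diag3 {X : Type*} : Set (X × X × X) := {p | p.1 = p.2.1 ∧ p.2.1 = p.2.2}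

/-- `(X,r)` is braided: the braid relation r¹²r²³r¹² = r²³r¹²r²³ holds on X³. -/
def IsBraided {X : Type*} (r : X × X → X × X) : Prop :=
  (r12 r) ∘ (r23 r) ∘ (r12 r) = (r23 r) ∘ (r12 r) ∘ (r23 r)

section Aux

variable {X : Type*} {r : X × X → X × X}

theorem r12_invol (h : Function.Involutive r) : Function.Involutive (r12 r) := by
  intro p; simp only [r12, Prod.mk.eta, h _]

theorem r23_invol (h : Function.Involutive r) : Function.Involutive (r23 r) := by
  intro p; simp only [r23, Prod.mk.eta, h _]

theorem lam_fix (hl : ∀ x : X, Function.Bijective (fun y => (r (x, y)).1))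
    (hsf : ∀ x : X, r (x, x) = (x, x)) {x y : X} (h : (r (x, y)).1 = x) : y = x := by
  apply (hl x).1
  show (r (x, y)).1 = (r (x, x)).1
  rw [hsf, h]

/-- orbits are closed under `r12`. -/
theorem orbit_closed12 {a p : X × X × X} (hp : Relation.EqvGen (dStep r) a p) :
    Relation.EqvGen (dStep r) a (r12 r p) :=
  Relation.EqvGen.trans _ _ _ hp (Relation.EqvGen.rel _ _ (Or.inl rfl))

theorem orbit_closed23 {a p : X × X × X} (hp : Relation.EqvGen (dStep r) a p) :
    Relation.EqvGen (dStep r) a (r23 r p) :=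
  Relation.EqvGen.trans _ _ _ hp (Relation.EqvGen.rel _ _ (Or.inr rfl))

/-- Any square-free orbit has at least 6 elements. -/
theorem six_le_orbit [Finite X]
    (hinv : Function.Involutive r)
    (hl : ∀ x : X, Function.Bijective (fun y => (r (x, y)).1))
    (hsf : ∀ x : X, r (x, x) = (x, x))
    {O : Set (X × X × X)} (hO : IsDOrbit r O)
    (hdiag : O ∩ (Diag2X ∪ XDiag2) = ∅) : 6 ≤ O.ncard := by
  classical
  obtain ⟨a, rfl⟩ := hO
  set O : Set (X × X × X) := {b | Relation.EqvGen (dStep r) a b} with hOdef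
  have hSq : ∀ p, Relation.EqvGen (dStep r) a p → p.1 ≠ p.2.1 ∧ p.2.1 ≠ p.2.2 := by
    intro p hp
    constructor <;> intro h <;>
      exact Set.eq_empty_iff_forall_notMem.mp hdiag p
        ⟨hp, by first | exact Or.inl h | exact Or.inr h⟩
  -- basic inequality facts
  have F1 : ∀ p : X × X × X, p.1 ≠ p.2.1 → r12 r p ≠ p := by
    intro p h1 heq
    have h' : (r (p.1, p.2.1)).1 = p.1 := congrArg Prod.fst heq
    exact h1 (lam_fix hl hsf h').symm
  have F2 : ∀ p : X × X × X, p.2.1 ≠ p.2.2 → r23 r p ≠ p := by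
    intro p h2 heq
    have h' : (r (p.2.1, p.2.2)).1 = p.2.1 := congrArg (fun q : X × X × X => q.2.1) heq
    exact h2 (lam_fix hl hsf h').symm
  have F3 : ∀ p : X × X × X, p.1 ≠ p.2.1 → r12 r p ≠ r23 r p := by
    intro p h1 heq
    have h' : (r (p.1, p.2.1)).1 = p.1 := congrArg Prod.fst heq
    exact h1 (lam_fix hl hsf h').symm
  have F4 : ∀ p : X × X × X, p.2.1 ≠ p.2.2 → r23 r (r12 r (r23 r p)) ≠ r12 r p := by
    intro p h2 heq
    have h0 : (r23 r (r12 r (r23 r p))).1 = (r12 r p).1 := congrArg Prod.fst heq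
    have h' : (r (p.1, (r (p.2.1, p.2.2)).1)).1 = (r (p.1, p.2.1)).1 := h0
    have h'' : (r (p.2.1, p.2.2)).1 = p.2.1 := (hl p.1).1 h'
    exact h2 (lam_fix hl hsf h'').symm
  -- the six elements
  set B := r12 r a with hB
  set C := r23 r a with hC
  set D := r23 r B with hD
  set E := r12 r C with hE
  set Ff := r12 r D with hF
  have ha : Relation.EqvGen (dStep r) a a := Relation.EqvGen.refl a
  have hb : Relation.EqvGen (dStep r) a B := orbit_closed12 ha
  have hc : Relation.EqvGen (dStep r) a C := orbit_closed23 ha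
  have hd : Relation.EqvGen (dStep r) a D := orbit_closed23 hb
  have he : Relation.EqvGen (dStep r) a E := orbit_closed12 hc
  have hf : Relation.EqvGen (dStep r) a Ff := orbit_closed12 hd
  obtain ⟨ha1, ha2⟩ := hSq a ha
  obtain ⟨hb1, hb2⟩ := hSq B hb
  obtain ⟨hc1, hc2⟩ := hSq C hc
  obtain ⟨hd1, hd2⟩ := hSq D hd
  have hAB : a ≠ B := fun h => F1 a ha1 h.symm
  have hAC : a ≠ C := fun h => F2 a ha2 h.symm
  have hAD : a ≠ D := by
    intro h
    have h2 := congrArg (r23 r) h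
    rw [hD, hB, r23_invol hinv] at h2
    exact F3 a ha1 h2.symm
  have hAE : a ≠ E := by
    intro h
    have h2 := congrArg (r12 r) h
    rw [hE, hC, r12_invol hinv] at h2
    exact F3 a ha1 h2
  have hAF : a ≠ Ff := by
    intro h
    have h2 := congrArg (r12 r) h
    rw [hF, hD, r12_invol hinv] at h2
    exact F2 B hb2 h2.symm
  have hBC : B ≠ C := F3 a ha1
  have hBD : B ≠ D := fun h => F2 B hb2 h.symm
  have hBE : B ≠ E := by
    intro h
    exact hAC ((r12_invol hinv).injective (h : r12 r a = r12 r C))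
  have hBF : B ≠ Ff := by
    intro h
    exact hAD ((r12_invol hinv).injective (h : r12 r a = r12 r D))
  have hCD : C ≠ D := by
    intro h
    exact hAB ((r23_invol hinv).injective (h : r23 r a = r23 r B))
  have hCE : C ≠ E := fun h => F1 C hc1 h.symm
  have hDE : D ≠ E := by
    intro h
    have h2 := congrArg (r23 r) h
    rw [hD, r23_invol hinv] at h2
    exact F4 a ha2 (h2.symm : r23 r (r12 r (r23 r a)) = r12 r a)
  have hCF : C ≠ Ff := by
    intro h
    have h2 := congrArg (r12 r) h
    rw [hF, r12_invol hinv] at h2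
    exact hDE h2.symm
  have hDF : D ≠ Ff := fun h => F1 D hd1 h.symm
  have hEF : E ≠ Ff := by
    intro h
    have h2 : C = D := (r12_invol hinv).injective (h : r12 r C = r12 r D)
    exact hCD h2
  -- assemble the finset
  have hVcard : ({a, B, C, D, E, Ff} : Finset (X × X × X)).card = 6 := by
    rw [Finset.card_insert_of_notMem (by
      simp only [Finset.mem_insert, Finset.mem_singleton]; push_neg
      exact ⟨hAB, hAC, hAD, hAE, hAF⟩)]
    rw [Finset.card_insert_of_notMem (by
      simp only [Finset.mem_insert, Finset.mem_singleton]; push_neg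
      exact ⟨hBC, hBD, hBE, hBF⟩)]
    rw [Finset.card_insert_of_notMem (by
      simp only [Finset.mem_insert, Finset.mem_singleton]; push_neg
      exact ⟨hCD, hCE, hCF⟩)]
    rw [Finset.card_insert_of_notMem (by
      simp only [Finset.mem_insert, Finset.mem_singleton]; push_neg
      exact ⟨hDE, hDF⟩)]
    rw [Finset.card_insert_of_notMem (by
      simp only [Finset.mem_singleton]; exact hEF)]
    rfl
  have hsub : (({a, B, C, D, E, Ff} : Finset (X × X × X)) : Set (X × X × X)) ⊆ O := by
    intro x hx
    simp only [Finset.coe_insert, Set.mem_insert_iff, Finset.coe_singleton,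
      Set.mem_singleton_iff] at hx
    rcases hx with rfl | rfl | rfl | rfl | rfl | rfl
    exacts [ha, hb, hc, hd, he, hf]
  calc (6 : ℕ) = (({a, B, C, D, E, Ff} : Finset (X × X × X)) : Set (X × X × X)).ncard := by
        rw [Set.ncard_coe_finset, hVcard]
    _ ≤ O.ncard := Set.ncard_le_ncard hsub (Set.toFinite O)

/-- Counting: disjoint finitely many 6-element-or-more sets inside `U`. -/
theorem six_mul_card_le {α : Type*} (G : Finset (Set α)) :
    ∀ U : Set α, U.Finite → (∀ O ∈ G, O ⊆ U) → (∀ O ∈ G, 6 ≤ O.ncard) →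
    ((G : Set (Set α)).Pairwise fun O O' => Disjoint O O') → 6 * G.card ≤ U.ncard := by
  classical
  induction G using Finset.induction_on with
  | empty => simp
  | @insert O G hOG ih =>
    intro U hU hsub h6 hdisj
    have hOU : O ⊆ U := hsub O (Finset.mem_insert_self _ _)
    have h6O : 6 ≤ O.ncard := h6 O (Finset.mem_insert_self _ _)
    have key : 6 * G.card ≤ (U \ O).ncard := by
      apply ih (U \ O) (hU.diff (t := O))
      · intro O' hO' x hx
        refine ⟨hsub O' (Finset.mem_insert_of_mem hO') hx, ?_⟩
        have hne : O ≠ O' := fun h => hOG (h ▸ hO')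
        have hdj : Disjoint O O' :=
          hdisj (by simp) (by simp [hO']) hne
        exact fun hxO => (Set.disjoint_left.mp hdj hxO) hx
      · exact fun O' hO' => h6 O' (Finset.mem_insert_of_mem hO')
      · exact hdisj.mono (fun x hx => by
          simp only [Finset.coe_insert, Set.mem_insert_iff]
          exact Or.inr hx)
    have hdiff : (U \ O).ncard = U.ncard - O.ncard := Set.ncard_diff hOU (hU.subset hOU)
    have hle : O.ncard ≤ U.ncard := Set.ncard_le_ncard hOU hU
    rw [Finset.card_insert_of_notMem hOG]
    omega

theorem nat_harith (n : ℕ) : n * ((n - 1) * (n - 1)) - n * (n - 1) = 6 * n.choose 3 := by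
  rcases n with _ | m
  · rfl
  rcases m with _ | k
  · rfl
  have hdesc : 6 * (k + 2).choose 3 = (k + 2).descFactorial 3 := by
    rw [Nat.descFactorial_eq_factorial_mul_choose]
    norm_num [Nat.factorial]
  show (k + 2) * ((k + 1) * (k + 1)) - (k + 2) * (k + 1) = 6 * (k + 2).choose 3
  rw [hdesc, show (k + 2).descFactorial 3 = k * ((k + 1) * ((k + 2) * 1)) from rfl,
    show (k + 2) * ((k + 1) * (k + 1)) = (k + 2) * (k + 1) * k + (k + 2) * (k + 1) from by ring,
    Nat.add_sub_cancel]
  ring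

end Aux

/-- The number of square-free D-orbits in X³ of a finite quantum binomial set
with |X| = n is at most C(n,3). -/
theorem card_squarefree_orbits_le {X : Type*} [Fintype X]
    (r : X × X → X × X) (hqb : IsQuantumBinomial r) :
    {O : Set (X × X × X) | IsDOrbit r O ∧ O ∩ (Diag2X ∪ XDiag2) = ∅}.ncard
      ≤ (Fintype.card X).choose 3 := by
  classical
  obtain ⟨hinv, hl, _hr, hsf⟩ := hqb
  set n := Fintype.card X with hn
  set S : Set (X × X × X) := {p | p.1 ≠ p.2.1 ∧ p.2.1 ≠ p.2.2} with hSdef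
  set A : Set (X × X × X) := {p | p.1 = p.2.1 ∧ p.2.1 ≠ p.2.2} with hAdef
  set T : Set (X × X × X) := (r23 r) '' A with hTdef
  set F : Set (Set (X × X × X)) :=
    {O | IsDOrbit r O ∧ O ∩ (Diag2X ∪ XDiag2) = ∅} with hFdef
  -- images of type A points lie in S
  have hTS : T ⊆ S := by
    rintro _ ⟨p, ⟨hp1, hp2⟩, rfl⟩
    constructor
    · intro h
      have h' : (r (p.2.1, p.2.2)).1 = p.2.1 := by
        have : p.1 = (r (p.2.1, p.2.2)).1 := h
        rw [← this, hp1]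
      exact hp2 (lam_fix hl hsf h').symm
    · intro h
      have h' : (r (p.2.1, p.2.2)).1 = (r (p.2.1, p.2.2)).2 := h
      have hw : r (p.2.1, p.2.2) = ((r (p.2.1, p.2.2)).1, (r (p.2.1, p.2.2)).1) :=
        Prod.ext_iff.mpr ⟨rfl, h'.symm⟩
      have h2 : r (r (p.2.1, p.2.2)) = (p.2.1, p.2.2) := hinv (p.2.1, p.2.2)
      rw [hw, hsf] at h2
      exact hp2 ((congrArg Prod.fst h2).symm.trans (congrArg Prod.snd h2))
  -- square-free orbits avoid T and lie in S
  have hOU : ∀ O ∈ F, O ⊆ S \ T := by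
    rintro O ⟨hOorb, hOdiag⟩ p hp
    constructor
    · constructor <;> intro h <;>
        exact Set.eq_empty_iff_forall_notMem.mp hOdiag p
          ⟨hp, by first | exact Or.inl h | exact Or.inr h⟩
    · rintro ⟨q, hqA, hqp⟩
      obtain ⟨a0, rfl⟩ := hOorb
      have hq : Relation.EqvGen (dStep r) a0 (r23 r (r23 r q)) :=
        orbit_closed23 (hqp ▸ hp)
      rw [r23_invol hinv] at hq
      exact Set.eq_empty_iff_forall_notMem.mp hOdiag q ⟨hq, Or.inl hqA.1⟩
  -- orbits are pairwise disjoint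
  have hdisj : (F : Set (Set (X × X × X))).Pairwise fun O O' => Disjoint O O' := by
    rintro O1 h1 O2 h2 hne
    obtain ⟨a1, rfl⟩ := h1.1
    obtain ⟨a2, rfl⟩ := h2.1
    rw [Set.disjoint_left]
    intro b hb1 hb2
    apply hne
    ext c
    constructor
    · intro hc
      exact Relation.EqvGen.trans _ _ _ hb2
        (Relation.EqvGen.trans _ _ _ (Relation.EqvGen.symm _ _ hb1) hc)
    · intro hc
      exact Relation.EqvGen.trans _ _ _ hb1
        (Relation.EqvGen.trans _ _ _ (Relation.EqvGen.symm _ _ hb2) hc)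
  -- cardinalities
  letI : Fintype ↥S := Fintype.ofFinite _
  letI : Fintype ↥A := Fintype.ofFinite _
  have hcard_ne : ∀ y : X, Fintype.card {x : X // x ≠ y} = n - 1 := by
    intro y
    rw [Fintype.card_subtype_compl, Fintype.card_subtype_eq]
  have hScard : S.ncard = n * ((n - 1) * (n - 1)) := by
    have e : ↥S ≃ Σ _y : X, ({x : X // x ≠ _y} × {z : X // z ≠ _y}) :=
      { toFun := fun p => ⟨p.1.2.1, ⟨p.1.1, p.2.1⟩, ⟨p.1.2.2, Ne.symm p.2.2⟩⟩
        invFun := fun q => ⟨(q.2.1.1, q.1, q.2.2.1), q.2.1.2, Ne.symm q.2.2.2⟩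
        left_inv := fun p => rfl
        right_inv := fun q => rfl }
    rw [← Nat.card_coe_set_eq, Nat.card_congr e, Nat.card_eq_fintype_card,
      Fintype.card_sigma]
    simp [Fintype.card_prod, hcard_ne, Finset.card_univ, n]
  have hAcard : A.ncard = n * (n - 1) := by
    have e : ↥A ≃ Σ _x : X, {z : X // z ≠ _x} :=
      { toFun := fun p => ⟨p.1.1, ⟨p.1.2.2, fun h => p.2.2 (by rw [← p.2.1, ← h])⟩⟩
        invFun := fun q => ⟨(q.1, q.1, q.2.1), rfl, Ne.symm q.2.2⟩
        left_inv := fun p => Subtype.ext (by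
          obtain ⟨⟨x, y, z⟩, h1, h2⟩ := p
          cases h1
          rfl)
        right_inv := fun q => rfl }
    rw [← Nat.card_coe_set_eq, Nat.card_congr e, Nat.card_eq_fintype_card,
      Fintype.card_sigma]
    simp [hcard_ne, Finset.card_univ, n]
  have hTcard : T.ncard = n * (n - 1) := by
    rw [hTdef, Set.ncard_image_of_injective _ (r23_invol hinv).injective, hAcard]
  -- main count
  have hFfin : F.Finite := Set.toFinite F
  have hmain : 6 * F.ncard ≤ (S \ T).ncard := by
    have hG : ((hFfin.toFinset : Finset (Set (X × X × X))) : Set (Set (X × X × X))) = F :=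
      hFfin.coe_toFinset
    have hmemF : ∀ O : Set (X × X × X), O ∈ hFfin.toFinset → O ∈ F := by
      intro O hO
      rw [← hG]
      exact hO
    have h := six_mul_card_le hFfin.toFinset (S \ T) (Set.toFinite _)
      (fun O hO => hOU O (hmemF O hO))
      (fun O hO => six_le_orbit hinv hl hsf (hmemF O hO).1 (hmemF O hO).2)
      (by rw [hG]; exact hdisj)
    rwa [← Set.ncard_eq_toFinset_card F hFfin] at h
  have hdiffcard : (S \ T).ncard = n * ((n - 1) * (n - 1)) - n * (n - 1) := by
    rw [Set.ncard_diff hTS (Set.toFinite T), hScard, hTcard]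
  have harith : n * ((n - 1) * (n - 1)) - n * (n - 1) = 6 * n.choose 3 := nat_harith n
  have hfinal : 6 * F.ncard ≤ 6 * n.choose 3 := by
    rw [← harith]
    exact le_trans hmain (le_of_eq hdiffcard)
  exact Nat.le_of_mul_le_mul_left hfinal (by norm_num)
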